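/- Let F be a finite field with |F| ≥ 5. Then Sp₄(F) is a perfect group, i.e., equal to its own commutator subgroup. -/

import Mathlib

open Matrix

namespace Sp4Aux

variable {F : Type*} [Field F]

local notation "M2" => Matrix (Fin 2) (Fin 2) F
local notation "M4" => Matrix ((Fin 2) ⊕ (Fin 2)) ((Fin 2) ⊕ (Fin 2)) F
local notation "SpG" => Matrix.symplecticGroup (Fin 2) F
local notation "JM" => Matrix.J (Fin 2) F

/-- upper unipotent -/
def eM (S : M2) : M4 := fromBlocks 1 S 0 1
/-- lower unipotent -/
def fM (S : M2) : M4 := fromBlocks 1 0 S 1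
/-- block diagonal -/
def mM (P Q : M2) : M4 := fromBlocks P 0 0 Q

lemma PQ_swap {P Q : M2} (h : P * Qᵀ = 1) : Q * Pᵀ = 1 := by
  have h1 : Qᵀ * P = 1 := mul_eq_one_comm.mp h
  have h2 : Pᵀ * Q = 1 := by
    simpa [Matrix.transpose_mul] using congrArg Matrix.transpose h1
  exact mul_eq_one_comm.mp h2

lemma eM_mul (S T : M2) : eM S * eM T = eM (S + T) := by
  simp [eM, fromBlocks_multiply, add_comm]

lemma fM_mul (S T : M2) : fM S * fM T = fM (S + T) := by
  simp [fM, fromBlocks_multiply, add_comm]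

lemma mM_mul (P Q P' Q' : M2) : mM P Q * mM P' Q' = mM (P * P') (Q * Q') := by
  simp [mM, fromBlocks_multiply]

lemma eM_zero : eM (0 : M2) = 1 := by simp [eM, ← fromBlocks_one]

lemma fM_zero : fM (0 : M2) = 1 := by simp [fM, ← fromBlocks_one]

lemma mM_one : mM (1 : M2) 1 = 1 := by simp [mM, ← fromBlocks_one]

lemma eM_inv (S : M2) : (eM S)⁻¹ = eM (-S) :=
  inv_eq_right_inv (by rw [eM_mul, add_neg_cancel, eM_zero])

lemma fM_inv (S : M2) : (fM S)⁻¹ = fM (-S) :=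
  inv_eq_right_inv (by rw [fM_mul, add_neg_cancel, fM_zero])

lemma mM_inv {P Q : M2} (h : P * Qᵀ = 1) : (mM P Q)⁻¹ = mM Qᵀ Pᵀ := by
  refine inv_eq_right_inv ?_
  have h2 : Q * Pᵀ = 1 := PQ_swap h
  rw [mM_mul, h, h2, mM_one]

lemma e_mem {S : M2} (h : Sᵀ = S) : eM S ∈ SpG := by
  rw [SymplecticGroup.mem_iff]
  simp [eM, Matrix.J, fromBlocks_multiply, fromBlocks_transpose, h]

lemma f_mem {S : M2} (h : Sᵀ = S) : fM S ∈ SpG := by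
  rw [SymplecticGroup.mem_iff]
  simp [fM, Matrix.J, fromBlocks_multiply, fromBlocks_transpose, h]

lemma m_mem {P Q : M2} (h : P * Qᵀ = 1) : mM P Q ∈ SpG := by
  have h2 : Q * Pᵀ = 1 := PQ_swap h
  rw [SymplecticGroup.mem_iff]
  simp [mM, Matrix.J, fromBlocks_multiply, fromBlocks_transpose, h, h2]

variable (F) in
/-- matrices of symplectic elements lying in the commutator subgroup -/
def Hset : Set M4 :=
  {A | ∃ h : SpG, h ∈ commutator SpG ∧ (h : M4) = A}

lemma mul_mem_H {A B : M4} (hA : A ∈ Hset F) (hB : B ∈ Hset F) : A * B ∈ Hset F := by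
  obtain ⟨a, ha, rfl⟩ := hA
  obtain ⟨b, hb, rfl⟩ := hB
  exact ⟨a * b, mul_mem ha hb, rfl⟩

lemma inv_mem_H {A : M4} (hA : A ∈ Hset F) : A⁻¹ ∈ Hset F := by
  obtain ⟨a, ha, rfl⟩ := hA
  exact ⟨a⁻¹, inv_mem ha, SymplecticGroup.coe_inv' a⟩

open scoped commutatorElement in
lemma comm_mem_H {A B : M4} (hA : A ∈ SpG) (hB : B ∈ SpG) :
    A * B * A⁻¹ * B⁻¹ ∈ Hset F := by
  refine ⟨⁅(⟨A, hA⟩ : SpG), (⟨B, hB⟩ : SpG)⁆, ?_, ?_⟩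
  · rw [commutator_def]
    exact Subgroup.commutator_mem_commutator (Subgroup.mem_top _) (Subgroup.mem_top _)
  · rw [commutatorElement_def]
    push_cast [SymplecticGroup.coe_inv']
    rfl

lemma conj_mem_H {A B : M4} (hA : A ∈ SpG) (hB : B ∈ Hset F) :
    A * B * A⁻¹ ∈ Hset F := by
  obtain ⟨b, hb, rfl⟩ := hB
  refine ⟨(⟨A, hA⟩ : SpG) * b * (⟨A, hA⟩ : SpG)⁻¹, ?_, ?_⟩
  · have : Subgroup.Normal (commutator SpG) := inferInstance
    simpa [mul_assoc] using this.conj_mem b hb ⟨A, hA⟩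
  · push_cast [SymplecticGroup.coe_inv']
    rfl

lemma t2 (a b c d : F) : !![a,b;c,d]ᵀ = !![a,c;b,d] := by
  ext i j; fin_cases i <;> fin_cases j <;> simp

lemma mM_eM_conj {P Q : M2} (h : P * Qᵀ = 1) (S : M2) :
    mM P Q * eM S * (mM P Q)⁻¹ = eM (P * S * Pᵀ) := by
  rw [mM_inv h]
  simp [mM, eM, fromBlocks_multiply, h, PQ_swap h, Matrix.mul_assoc]

lemma eHcomm {P Q S : M2} (h : P * Qᵀ = 1) (hS : Sᵀ = S) :
    eM (P * S * Pᵀ - S) ∈ Hset F := by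
  have hc := comm_mem_H (F := F) (m_mem h) (e_mem hS)
  rw [mM_eM_conj h, eM_inv, eM_mul] at hc
  simpa [sub_eq_add_neg] using hc

lemma exists_t [Fintype F] (h5 : 5 ≤ Fintype.card F) :
    ∃ t : F, t ≠ 0 ∧ t ≠ 1 ∧ t ≠ -1 := by
  classical
  by_contra hcon
  push_neg at hcon
  have hsub : (Finset.univ : Finset F) ⊆ {0, 1, -1} := by
    intro t _
    by_cases h0 : t = 0
    · simp [h0]
    by_cases h1 : t = 1
    · simp [h1]
    have := hcon t h0 h1
    simp [this]
  have h1 : Fintype.card F ≤ ({0, 1, -1} : Finset F).card := by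
    simpa [Finset.card_univ] using Finset.card_le_card hsub
  have h2 : ({0, 1, -1} : Finset F).card ≤ 3 := by
    apply le_trans (Finset.card_insert_le _ _)
    have := Finset.card_insert_le (1 : F) ({-1} : Finset F)
    simp only [Finset.card_singleton] at this
    omega
  omega

variable [Fintype F]

lemma eH (h5 : 5 ≤ Fintype.card F) {S : M2} (hS : Sᵀ = S) : eM S ∈ Hset F := by
  obtain ⟨t, ht0, ht1, htm1⟩ := exists_t h5
  have hb : S 1 0 = S 0 1 := by
    conv_lhs => rw [← hS]
    simp
  have hq : t * t - 1 ≠ 0 := by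
    intro h
    rcases mul_self_eq_one_iff.mp (by linear_combination h) with h' | h'
    exacts [ht1 h', htm1 h']
  have hl : t - 1 ≠ 0 := sub_ne_zero.mpr ht1
  set a := S 0 0 with ha
  set b := S 0 1 with hbdef
  set c := S 1 1 with hc
  have step1 : eM !![a, b; b, 0] ∈ Hset F := by
    have h := eHcomm (F := F) (P := !![t,0;0,1]) (Q := !![t⁻¹,0;0,1])
      (S := !![a/(t*t-1), b/(t-1); b/(t-1), 0])
      (by rw [t2]; ext i j; fin_cases i <;> fin_cases j <;> simp [Matrix.mul_fin_two, ht0]) (by rw [t2])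
    have heq : !![t,0;0,1] * !![a/(t*t-1), b/(t-1); b/(t-1), 0] * !![t,0;0,1]ᵀ
        - !![a/(t*t-1), b/(t-1); b/(t-1), 0] = !![a, b; b, 0] := by
      rw [t2]
      ext i j
      fin_cases i <;> fin_cases j <;> simp [Matrix.mul_fin_two] <;> field_simp [show t ^ 2 - 1 ≠ 0 by rwa [sq]] <;> ring
    rwa [heq] at h
  have step2 : eM !![(0:F), 0; 0, c] ∈ Hset F := by
    have h := eHcomm (F := F) (P := !![1,0;0,t]) (Q := !![1,0;0,t⁻¹])
      (S := !![0, 0; 0, c/(t*t-1)])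
      (by rw [t2]; ext i j; fin_cases i <;> fin_cases j <;> simp [Matrix.mul_fin_two, ht0]) (by rw [t2])
    have heq : !![1,0;0,t] * !![(0:F), 0; 0, c/(t*t-1)] * !![1,0;0,t]ᵀ
        - !![(0:F), 0; 0, c/(t*t-1)] = !![0, 0; 0, c] := by
      rw [t2]
      ext i j
      fin_cases i <;> fin_cases j <;> simp [Matrix.mul_fin_two] <;> field_simp [show t ^ 2 - 1 ≠ 0 by rwa [sq]] <;> ring
    rwa [heq] at h
  have hSsum : S = !![a, b; b, 0] + !![(0:F), 0; 0, c] := by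
    rw [eta_fin_two S, ← ha, ← hbdef, ← hc, hb]
    ext i j
    fin_cases i <;> fin_cases j <;> simp
  rw [hSsum, ← eM_mul]
  exact mul_mem_H step1 step2

lemma J_eq_efe : (JM : M4) = eM (-1) * fM 1 * eM (-1) := by
  simp [Matrix.J, eM, fM, fromBlocks_multiply]

lemma fH (h5 : 5 ≤ Fintype.card F) {S : M2} (hS : Sᵀ = S) : fM S ∈ Hset F := by
  have hconj : (JM : M4) * eM (-S) * (JM : M4)⁻¹ = fM S := by
    rw [Matrix.J_inv]
    simp [Matrix.J, eM, fM, fromBlocks_multiply, Matrix.fromBlocks_neg]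
  have := conj_mem_H (F := F) (SymplecticGroup.J_mem _ _) (eH h5 (by rw [transpose_neg, hS]))
  rwa [hconj] at this

lemma JH (h5 : 5 ≤ Fintype.card F) : (JM : M4) ∈ Hset F := by
  rw [J_eq_efe]
  exact mul_mem_H (mul_mem_H (eH h5 (by simp)) (fH h5 (by simp))) (eH h5 (by simp))

lemma zero2 : (0 : M2) = !![0,0;0,0] := by
  ext i j; fin_cases i <;> fin_cases j <;> rfl

lemma one2 : (1 : M2) = !![1,0;0,1] := Matrix.one_fin_two

/-- embedding of 2×2 matrices into coordinates (e₁, f₁) -/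
def phi1 (a b c d : F) : M4 :=
  fromBlocks !![a,0;0,1] !![b,0;0,0] !![c,0;0,0] !![d,0;0,1]

/-- embedding of 2×2 matrices into coordinates (e₂, f₂) -/
def phi2 (a b c d : F) : M4 :=
  fromBlocks !![1,0;0,a] !![0,0;0,b] !![0,0;0,c] !![1,0;0,d]

lemma phi1_mul (a b c d a' b' c' d' : F) :
    phi1 a b c d * phi1 a' b' c' d' =
      phi1 (a*a'+b*c') (a*b'+b*d') (c*a'+d*c') (c*b'+d*d') := by
  simp only [phi1, fromBlocks_multiply]
  rw [fromBlocks_inj]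
  refine ⟨?_, ?_, ?_, ?_⟩ <;>
    · ext i j
      fin_cases i <;> fin_cases j <;>
        simp [Matrix.mul_apply, Fin.sum_univ_two] <;> ring

lemma phi2_mul (a b c d a' b' c' d' : F) :
    phi2 a b c d * phi2 a' b' c' d' =
      phi2 (a*a'+b*c') (a*b'+b*d') (c*a'+d*c') (c*b'+d*d') := by
  simp only [phi2, fromBlocks_multiply]
  rw [fromBlocks_inj]
  refine ⟨?_, ?_, ?_, ?_⟩ <;>
    · ext i j
      fin_cases i <;> fin_cases j <;>
        simp [Matrix.mul_apply, Fin.sum_univ_two] <;> ring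

lemma phi1_congr {a b c d a' b' c' d' : F} (h1 : a = a') (h2 : b = b')
    (h3 : c = c') (h4 : d = d') : phi1 a b c d = phi1 a' b' c' d' := by
  rw [h1, h2, h3, h4]

lemma phi2_congr {a b c d a' b' c' d' : F} (h1 : a = a') (h2 : b = b')
    (h3 : c = c') (h4 : d = d') : phi2 a b c d = phi2 a' b' c' d' := by
  rw [h1, h2, h3, h4]

lemma phi1_e (u : F) : phi1 1 u 0 1 = eM !![u,0;0,0] := by
  rw [phi1, eM, one2, zero2]

lemma phi1_f (u : F) : phi1 1 0 u 1 = fM !![u,0;0,0] := by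
  rw [phi1, fM, one2, zero2]

lemma phi1_m (u v : F) : phi1 u 0 0 v = mM !![u,0;0,1] !![v,0;0,1] := by
  rw [phi1, mM, zero2]

lemma phi2_e (u : F) : phi2 1 u 0 1 = eM !![0,0;0,u] := by
  rw [phi2, eM, one2, zero2]

lemma phi2_f (u : F) : phi2 1 0 u 1 = fM !![0,0;0,u] := by
  rw [phi2, fM, one2, zero2]

lemma phi2_m (u v : F) : phi2 u 0 0 v = mM !![1,0;0,u] !![1,0;0,v] := by
  rw [phi2, mM, zero2]

variable [Fintype F]

lemma diag1H (h5 : 5 ≤ Fintype.card F) {u : F} (hu : u ≠ 0) :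
    mM !![u,0;0,1] !![u⁻¹,0;0,1] ∈ Hset F := by
  have key : mM !![u,0;0,1] !![u⁻¹,0;0,1] =
      eM !![u,0;0,0] * fM !![-u⁻¹,0;0,0] * eM !![u,0;0,0] *
      eM !![-1,0;0,0] * fM !![1,0;0,0] * eM !![-1,0;0,0] := by
    rw [← phi1_m, ← phi1_e u, ← phi1_f (-u⁻¹), ← phi1_e (-1), ← phi1_f 1]
    simp only [phi1_mul]
    apply phi1_congr <;> field_simp <;> ring
  rw [key]
  refine mul_mem_H (mul_mem_H (mul_mem_H (mul_mem_H (mul_mem_H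
    (eH h5 ?_) (fH h5 ?_)) (eH h5 ?_)) (eH h5 ?_)) (fH h5 ?_)) (eH h5 ?_) <;>
    (rw [t2])

lemma diag2H (h5 : 5 ≤ Fintype.card F) {u : F} (hu : u ≠ 0) :
    mM !![1,0;0,u] !![1,0;0,u⁻¹] ∈ Hset F := by
  have key : mM !![1,0;0,u] !![1,0;0,u⁻¹] =
      eM !![0,0;0,u] * fM !![0,0;0,-u⁻¹] * eM !![0,0;0,u] *
      eM !![0,0;0,-1] * fM !![0,0;0,1] * eM !![0,0;0,-1] := by
    rw [← phi2_m, ← phi2_e u, ← phi2_f (-u⁻¹), ← phi2_e (-1), ← phi2_f 1]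
    simp only [phi2_mul]
    apply phi2_congr <;> field_simp <;> ring
  rw [key]
  refine mul_mem_H (mul_mem_H (mul_mem_H (mul_mem_H (mul_mem_H
    (eH h5 ?_) (fH h5 ?_)) (eH h5 ?_)) (eH h5 ?_)) (fH h5 ?_)) (eH h5 ?_) <;>
    (rw [t2])

lemma mdiagH (h5 : 5 ≤ Fintype.card F) {u v : F} (hu : u ≠ 0) (hv : v ≠ 0) :
    mM !![u,0;0,v] !![u⁻¹,0;0,v⁻¹] ∈ Hset F := by
  have h := mul_mem_H (diag1H h5 hu) (diag2H h5 hv)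
  rw [mM_mul] at h
  have e1 : !![u,0;0,1] * !![1,0;0,v] = !![u,0;0,v] := by
    ext i j; fin_cases i <;> fin_cases j <;> simp [Matrix.mul_apply, Fin.sum_univ_two]
  have e2 : !![u⁻¹,0;0,1] * !![1,0;0,v⁻¹] = !![u⁻¹,0;0,v⁻¹] := by
    ext i j; fin_cases i <;> fin_cases j <;> simp [Matrix.mul_apply, Fin.sum_univ_two]
  rwa [e1, e2] at h

lemma E12H (h5 : 5 ≤ Fintype.card F) (b : F) :
    mM !![1,b;0,1] !![1,0;-b,1] ∈ Hset F := by
  have key : eM !![0,1;1,0] * fM !![0,0;0,b] * eM (-(!![0,1;1,0])) * fM (-(!![0,0;0,b]))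
      * eM !![b,0;0,0] = mM !![1,b;0,1] !![1,0;-b,1] := by
    simp only [eM, fM, mM, fromBlocks_multiply]
    rw [fromBlocks_inj]
    refine ⟨?_, ?_, ?_, ?_⟩ <;>
      · ext i j
        fin_cases i <;> fin_cases j <;>
          simp [Matrix.mul_apply, Fin.sum_univ_two] <;> ring
  have hc := comm_mem_H (F := F) (e_mem (S := !![0,1;1,0]) (by rw [t2]))
    (f_mem (S := !![0,0;0,b]) (by rw [t2]))
  rw [eM_inv, fM_inv] at hc
  have h := mul_mem_H hc (eH h5 (S := !![b,0;0,0]) (by rw [t2]))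
  rwa [key] at h

lemma J_mM_conj (P Q : M2) : (JM : M4) * mM P Q * (JM : M4)⁻¹ = mM Q P := by
  rw [Matrix.J_inv]
  simp [Matrix.J, mM, fromBlocks_multiply, Matrix.fromBlocks_neg]

lemma E21H (h5 : 5 ≤ Fintype.card F) (b : F) :
    mM !![1,0;b,1] !![1,-b;0,1] ∈ Hset F := by
  have h := conj_mem_H (F := F) (SymplecticGroup.J_mem _ _) (E12H h5 (-b))
  rw [J_mM_conj] at h
  simpa using h

lemma PQ_one_mul {P₁ Q₁ P₂ Q₂ : M2} (h1 : P₁ * Q₁ᵀ = 1) (h2 : P₂ * Q₂ᵀ = 1) :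
    (P₁ * P₂) * (Q₁ * Q₂)ᵀ = 1 := by
  rw [Matrix.transpose_mul]
  calc P₁ * P₂ * (Q₂ᵀ * Q₁ᵀ) = P₁ * (P₂ * Q₂ᵀ) * Q₁ᵀ := by
        simp only [mul_assoc]
    _ = 1 := by rw [h2, mul_one, h1]

lemma mQ_unique {P Q Q' : M2} (h : P * Qᵀ = 1) (h' : P * Q'ᵀ = 1) : Q = Q' := by
  have h1 : Qᵀ * P = 1 := mul_eq_one_comm.mp h
  have : Qᵀ = Q'ᵀ := by
    calc Qᵀ = Qᵀ * (P * Q'ᵀ) := by rw [h', mul_one]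
      _ = (Qᵀ * P) * Q'ᵀ := by rw [mul_assoc]
      _ = Q'ᵀ := by rw [h1, one_mul]
  simpa using congrArg Matrix.transpose this

lemma mH_aux (h5 : 5 ≤ Fintype.card F) (P : M2) (hp : P 0 0 ≠ 0)
    (hdet : P.det ≠ 0) : ∃ Q, P * Qᵀ = 1 ∧ mM P Q ∈ Hset F := by
  obtain ⟨p, q, r, s, hP⟩ : ∃ p q r s, P = !![p,q;r,s] :=
    ⟨_, _, _, _, eta_fin_two P⟩
  subst hP
  replace hp : p ≠ 0 := by simpa using hp
  rw [Matrix.det_fin_two_of] at hdet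
  have hdne : (p*s - q*r) * p⁻¹ ≠ 0 := mul_ne_zero hdet (inv_ne_zero hp)
  have hdecomp : !![p,q;r,s] =
      !![1,0;r*p⁻¹,1] * (!![p,0;0,(p*s-q*r)*p⁻¹] * !![1,q*p⁻¹;0,1]) := by
    ext i j
    fin_cases i <;> fin_cases j <;>
      simp [Matrix.mul_apply, Fin.sum_univ_two] <;> field_simp <;> ring
  refine ⟨!![1,-(r*p⁻¹);0,1] * (!![p⁻¹,0;0,((p*s-q*r)*p⁻¹)⁻¹] * !![1,0;-(q*p⁻¹),1]),
    ?_, ?_⟩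
  · rw [hdecomp]
    refine PQ_one_mul ?_ (PQ_one_mul ?_ ?_) <;>
      · rw [t2]
        ext i j
        fin_cases i <;> fin_cases j <;>
          simp [Matrix.mul_apply, Fin.sum_univ_two, hp, hdne] <;> field_simp
  · have h := mul_mem_H (E21H h5 (r*p⁻¹))
      (mul_mem_H (mdiagH h5 hp hdne) (E12H h5 (q*p⁻¹)))
    rw [mM_mul, mM_mul] at h
    rwa [← hdecomp] at h

lemma mH (h5 : 5 ≤ Fintype.card F) {P Q : M2} (h : P * Qᵀ = 1) :
    mM P Q ∈ Hset F := by
  have hdet : P.det ≠ 0 := by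
    have := congrArg Matrix.det h
    rw [Matrix.det_mul, Matrix.det_transpose, Matrix.det_one] at this
    exact left_ne_zero_of_mul_eq_one this
  by_cases hp : P 0 0 = 0
  · have hr : P 1 0 ≠ 0 := by
      intro hr0
      apply hdet
      rw [Matrix.det_fin_two, hp, hr0]
      ring
    set P' : M2 := !![1,-1;0,1] * P with hP'
    have hp' : P' 0 0 ≠ 0 := by
      have : P' 0 0 = P 0 0 - P 1 0 := by
        rw [hP']; simp [Matrix.mul_apply, Fin.sum_univ_two]; ring
      rw [this, hp]
      simpa using hr
    have hdet' : P'.det ≠ 0 := by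
      rw [hP', Matrix.det_mul]
      simpa [Matrix.det_fin_two_of] using hdet
    obtain ⟨Q', hQ', hm'⟩ := mH_aux h5 P' hp' hdet'
    have hfac : P = !![1,1;0,1] * P' := by
      rw [hP', ← mul_assoc]
      have : (!![1,1;0,1] : M2) * !![1,-1;0,1] = 1 := by
        ext i j; fin_cases i <;> fin_cases j <;>
          simp [Matrix.mul_apply, Fin.sum_univ_two]
      rw [this, one_mul]
    have hpair : (!![1,1;0,1] : M2) * (!![1,0;-1,1] : M2)ᵀ = 1 := by
      rw [t2]
      ext i j; fin_cases i <;> fin_cases j <;>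
        simp [Matrix.mul_apply, Fin.sum_univ_two]
    have h2 : P * (!![1,0;-1,1] * Q')ᵀ = 1 := by
      rw [hfac]; exact PQ_one_mul hpair hQ'
    have hQeq : Q = !![1,0;-1,1] * Q' := mQ_unique h h2
    have hm := mul_mem_H (E12H h5 1) hm'
    rw [mM_mul] at hm
    rw [hQeq, hfac]
    exact hm
  · obtain ⟨Q', hQ', hm'⟩ := mH_aux h5 P hp hdet
    rw [mQ_unique h hQ']
    exact hm'

lemma sp_row {A B C D : M2} (h : fromBlocks A B C D ∈ SpG) :
    B * Aᵀ = A * Bᵀ ∧ D * Aᵀ - C * Bᵀ = 1 := by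
  rw [SymplecticGroup.mem_iff, Matrix.J] at h
  simp only [fromBlocks_transpose, fromBlocks_multiply, Matrix.mul_zero, Matrix.zero_mul,
    Matrix.mul_one, Matrix.mul_neg, Matrix.neg_mul, add_zero, zero_add] at h
  rw [fromBlocks_inj] at h
  obtain ⟨h1, h2, h3, h4⟩ := h
  exact ⟨by rw [← add_neg_eq_zero]; exact h1, by rwa [sub_eq_add_neg]⟩

lemma sp_col {A B C D : M2} (h : fromBlocks A B C D ∈ SpG) :
    Cᵀ * A = Aᵀ * C := by
  rw [SymplecticGroup.mem_iff', Matrix.J] at h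
  simp only [fromBlocks_transpose, fromBlocks_multiply, Matrix.mul_zero, Matrix.zero_mul,
    Matrix.mul_one, Matrix.mul_neg, Matrix.neg_mul, Matrix.one_mul, add_zero, zero_add] at h
  rw [fromBlocks_inj] at h
  obtain ⟨h1, h2, h3, h4⟩ := h
  rw [← add_neg_eq_zero]
  exact h1

variable [Fintype F]

lemma main_inv (h5 : 5 ≤ Fintype.card F) {A B C D : M2}
    (hg : fromBlocks A B C D ∈ SpG) (hA : IsUnit A.det) :
    fromBlocks A B C D ∈ Hset F := by
  obtain ⟨hBA, hDA⟩ := sp_row hg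
  have hCA := sp_col hg
  have hAA : A * A⁻¹ = 1 := mul_nonsing_inv A hA
  have hA'A : A⁻¹ * A = 1 := nonsing_inv_mul A hA
  have hAt : Aᵀ * A⁻¹ᵀ = 1 := by
    rw [← Matrix.transpose_mul, hA'A, Matrix.transpose_one]
  have hAt' : A⁻¹ᵀ * Aᵀ = 1 := by
    rw [← Matrix.transpose_mul, hAA, Matrix.transpose_one]
  -- C * A⁻¹ is symmetric
  have hCs : (C * A⁻¹)ᵀ = C * A⁻¹ := by
    rw [Matrix.transpose_mul]
    calc A⁻¹ᵀ * Cᵀ = A⁻¹ᵀ * (Cᵀ * (A * A⁻¹)) := by rw [hAA, mul_one]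
      _ = A⁻¹ᵀ * (Cᵀ * A) * A⁻¹ := by simp only [mul_assoc]
      _ = A⁻¹ᵀ * (Aᵀ * C) * A⁻¹ := by rw [hCA]
      _ = (A⁻¹ᵀ * Aᵀ) * (C * A⁻¹) := by simp only [mul_assoc]
      _ = C * A⁻¹ := by rw [hAt', one_mul]
  -- B * Aᵀ is symmetric
  have hBs : (B * Aᵀ)ᵀ = B * Aᵀ := by
    rw [Matrix.transpose_mul, Matrix.transpose_transpose, hBA]
  -- A⁻¹ * B = Bᵀ * A⁻¹ᵀ
  have hAB : A⁻¹ * B = Bᵀ * A⁻¹ᵀ := by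
    calc A⁻¹ * B = A⁻¹ * (B * (Aᵀ * A⁻¹ᵀ)) := by rw [hAt, mul_one]
      _ = A⁻¹ * (B * Aᵀ) * A⁻¹ᵀ := by simp only [mul_assoc]
      _ = A⁻¹ * (A * Bᵀ) * A⁻¹ᵀ := by rw [hBA]
      _ = (A⁻¹ * A) * (Bᵀ * A⁻¹ᵀ) := by simp only [mul_assoc]
      _ = Bᵀ * A⁻¹ᵀ := by rw [hA'A, one_mul]
  -- D in terms of the rest
  have hD : D = C * A⁻¹ * B + A⁻¹ᵀ := by
    have h1 : D * Aᵀ = 1 + C * Bᵀ := by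
      rw [← hDA, sub_add_cancel]
    calc D = D * (Aᵀ * A⁻¹ᵀ) := by rw [hAt, mul_one]
      _ = (D * Aᵀ) * A⁻¹ᵀ := by simp only [mul_assoc]
      _ = (1 + C * Bᵀ) * A⁻¹ᵀ := by rw [h1]
      _ = A⁻¹ᵀ + C * (Bᵀ * A⁻¹ᵀ) := by rw [add_mul, one_mul, mul_assoc]
      _ = A⁻¹ᵀ + C * (A⁻¹ * B) := by rw [hAB]
      _ = C * A⁻¹ * B + A⁻¹ᵀ := by rw [add_comm, mul_assoc]
  -- factorization
  have hfac : fromBlocks A B C D = fM (C * A⁻¹) * eM (B * Aᵀ) * mM A A⁻¹ᵀ := by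
    simp only [fM, eM, mM, fromBlocks_multiply, Matrix.mul_zero, Matrix.zero_mul,
      Matrix.mul_one, Matrix.one_mul, add_zero, zero_add]
    rw [fromBlocks_inj]
    refine ⟨rfl, ?_, ?_, ?_⟩
    · rw [mul_assoc, hAt, mul_one]
    · rw [mul_assoc, hA'A, mul_one]
    · rw [add_mul, one_mul, mul_assoc (C * A⁻¹) (B * Aᵀ) _, mul_assoc B Aᵀ _, hAt,
        mul_one]
      exact hD
  rw [hfac]
  exact mul_mem_H (mul_mem_H (fH h5 hCs) (eH h5 hBs))
    (mH h5 (by rw [Matrix.transpose_transpose]; exact hAA))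

lemma rank_aux (M : M2) (h00 : M 0 0 ≠ 0) (hdet : M.det = 0) :
    ∃ P Q : M2, IsUnit P.det ∧ IsUnit Q.det ∧ P * M * Q = !![1,0;0,0] := by
  obtain ⟨p, q, r, s, rfl⟩ : ∃ p q r s, M = !![p,q;r,s] := ⟨_,_,_,_, eta_fin_two M⟩
  replace h00 : p ≠ 0 := by simpa using h00
  rw [Matrix.det_fin_two_of] at hdet
  refine ⟨!![p⁻¹, 0; -(r*p⁻¹), 1], !![1, -(q*p⁻¹); 0, 1], ?_, ?_, ?_⟩
  · rw [Matrix.det_fin_two_of]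
    simp [isUnit_iff_ne_zero, h00]
  · rw [Matrix.det_fin_two_of]
    simp
  · ext i j
    fin_cases i <;> fin_cases j <;>
      simp [Matrix.mul_apply, Fin.sum_univ_two] <;> field_simp <;>
        grind

lemma rank1_normal {A : M2} (hA0 : A ≠ 0) (hdet : A.det = 0) :
    ∃ P Q : M2, IsUnit P.det ∧ IsUnit Q.det ∧ P * A * Q = !![1,0;0,0] := by
  have hW : IsUnit (!![0,1;1,0] : M2).det := by
    rw [Matrix.det_fin_two_of]; norm_num
  by_cases h00 : A 0 0 ≠ 0
  · exact rank_aux A h00 hdet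
  push_neg at h00
  by_cases h01 : A 0 1 ≠ 0
  · have h1 : ((A * !![0,1;1,0] : M2)) 0 0 ≠ 0 := by
      simpa [Matrix.mul_apply, Matrix.vecMul, dotProduct, Fin.sum_univ_two] using h01
    have h2 : ((A * !![0,1;1,0] : M2)).det = 0 := by
      rw [Matrix.det_mul, hdet, zero_mul]
    obtain ⟨P, Q, hP, hQ, hPQ⟩ := rank_aux _ h1 h2
    exact ⟨P, !![0,1;1,0] * Q, hP, by rw [Matrix.det_mul]; exact hW.mul hQ, by
      rw [← hPQ]; simp only [mul_assoc]⟩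
  push_neg at h01
  by_cases h10 : A 1 0 ≠ 0
  · have h1 : ((!![0,1;1,0] * A : M2)) 0 0 ≠ 0 := by
      simpa [Matrix.mul_apply, Matrix.vecMul, dotProduct, Fin.sum_univ_two] using h10
    have h2 : ((!![0,1;1,0] * A : M2)).det = 0 := by
      rw [Matrix.det_mul, hdet, mul_zero]
    obtain ⟨P, Q, hP, hQ, hPQ⟩ := rank_aux _ h1 h2
    exact ⟨P * !![0,1;1,0], Q, by rw [Matrix.det_mul]; exact hP.mul hW, hQ, by
      rw [← hPQ]; simp only [mul_assoc]⟩
  push_neg at h10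
  by_cases h11 : A 1 1 ≠ 0
  · have h1 : ((!![0,1;1,0] * A * !![0,1;1,0] : M2)) 0 0 ≠ 0 := by
      simpa [Matrix.mul_apply, Matrix.vecMul, dotProduct, Fin.sum_univ_two] using h11
    have h2 : ((!![0,1;1,0] * A * !![0,1;1,0] : M2)).det = 0 := by
      rw [Matrix.det_mul, Matrix.det_mul, hdet]; ring
    obtain ⟨P, Q, hP, hQ, hPQ⟩ := rank_aux _ h1 h2
    exact ⟨P * !![0,1;1,0], !![0,1;1,0] * Q, by rw [Matrix.det_mul]; exact hP.mul hW,
      by rw [Matrix.det_mul]; exact hW.mul hQ, by rw [← hPQ]; simp only [mul_assoc]⟩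
  push_neg at h11
  exact absurd (by ext i j; fin_cases i <;> fin_cases j <;>
    simp [h00, h01, h10, h11]) hA0

lemma sp_mem_H (h5 : 5 ≤ Fintype.card F) {g : M4} (hg : g ∈ SpG) : g ∈ Hset F := by
  obtain ⟨A, B, C, D, rfl⟩ : ∃ A B C D, g = fromBlocks A B C D :=
    ⟨_, _, _, _, (fromBlocks_toBlocks g).symm⟩
  by_cases hA : IsUnit A.det
  · exact main_inv h5 hg hA
  rw [isUnit_iff_ne_zero, not_not] at hA
  by_cases hA0 : A = 0
  · subst hA0
    obtain ⟨-, hDA⟩ := sp_row hg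
    have h1 : -(C * Bᵀ) = 1 := by simpa using hDA
    have hC : IsUnit C.det := by
      have h2 := congrArg Matrix.det h1
      rw [Matrix.det_neg, Matrix.det_mul, Matrix.det_one, Matrix.det_transpose] at h2
      simp only [Fintype.card_fin] at h2
      refine IsUnit.of_mul_eq_one (B.det) ?_
      rw [← h2]; ring
    have hJg : (JM : M4) * fromBlocks 0 B C D = fromBlocks (-C) (-D) 0 B := by
      rw [Matrix.J]
      simp [fromBlocks_multiply]
    have hmem2 : fromBlocks (-C) (-D) 0 B ∈ SpG := by
      rw [← hJg]; exact mul_mem (SymplecticGroup.J_mem _ _) hg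
    have hdet2 : IsUnit (-C : M2).det := by
      rw [Matrix.det_neg]
      simpa [Fintype.card_fin] using hC
    have h2 := main_inv h5 hmem2 hdet2
    have hJJ : (JM : M4)⁻¹ * ((JM : M4) * fromBlocks 0 B C D) = fromBlocks 0 B C D := by
      rw [← mul_assoc, Matrix.J_inv, Matrix.neg_mul, Matrix.J_squared]
      simp
    rw [← hJJ, hJg]
    exact mul_mem_H (inv_mem_H (JH h5)) h2
  · obtain ⟨P, Q, hP, hQ, hPAQ⟩ := rank1_normal hA0 hA
    set P' : M2 := (P⁻¹)ᵀ with hP'def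
    set Q' : M2 := (Q⁻¹)ᵀ with hQ'def
    have hPP' : P * P'ᵀ = 1 := by
      rw [hP'def, Matrix.transpose_transpose]; exact mul_nonsing_inv P hP
    have hQQ' : Q * Q'ᵀ = 1 := by
      rw [hQ'def, Matrix.transpose_transpose]; exact mul_nonsing_inv Q hQ
    have hblocks : mM P P' * fromBlocks A B C D * mM Q Q' =
        fromBlocks !![1,0;0,0] (P*B*Q') (P'*C*Q) (P'*D*Q') := by
      simp only [mM, fromBlocks_multiply, Matrix.mul_zero, Matrix.zero_mul, add_zero,
        zero_add]
      rw [fromBlocks_inj]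
      exact ⟨hPAQ, rfl, rfl, rfl⟩
    set C2 : M2 := P' * C * Q with hC2def
    have hg₂ : fromBlocks !![1,0;0,0] (P*B*Q') C2 (P'*D*Q') ∈ SpG := by
      rw [← hblocks]
      exact mul_mem (mul_mem (m_mem hPP') hg) (m_mem hQQ')
    -- C2 0 1 = 0
    have hcol := sp_col hg₂
    rw [t2] at hcol
    have hc12 : C2 0 1 = 0 := by
      have h3 := congrFun (congrFun hcol 0) 1
      simpa [Matrix.mul_apply, Fin.sum_univ_two, Matrix.transpose_apply] using h3.symm
    -- C2 1 1 ≠ 0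
    have hc22 : C2 1 1 ≠ 0 := by
      intro hc22
      have hu : IsUnit (fromBlocks !![1,0;0,0] (P*B*Q') C2 (P'*D*Q')) :=
        (Matrix.isUnit_iff_isUnit_det _).mpr (SymplecticGroup.symplectic_det hg₂)
      have hinj := Matrix.mulVec_injective_iff_isUnit.mpr hu
      have hxv : (fromBlocks !![1,0;0,0] (P*B*Q') C2 (P'*D*Q')).mulVec
          (Sum.elim ![(0:F),1] 0) = 0 := by
        rw [fromBlocks_mulVec]
        funext x
        rcases x with i | i <;> fin_cases i <;>
          simp [Matrix.mulVec, dotProduct, Fin.sum_univ_two, hc12, hc22]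
      have h0 : Sum.elim ![(0:F),1] (0 : Fin 2 → F) = 0 := by
        apply hinj
        rw [hxv, Matrix.mulVec_zero]
      have h4 := congrFun h0 (Sum.inl 1)
      simpa using h4
    -- multiply by eM E22 on the left to make the top-left block invertible
    have hg₃eq : eM !![0,0;0,1] * fromBlocks !![1,0;0,0] (P*B*Q') C2 (P'*D*Q') =
        fromBlocks (!![1,0;0,0] + !![0,0;0,1] * C2)
          ((P*B*Q') + !![0,0;0,1] * (P'*D*Q')) C2 (P'*D*Q') := by
      simp [eM, fromBlocks_multiply]
    have hTL : (!![1,0;0,0] + !![0,0;0,1] * C2) = !![1, 0; C2 1 0, C2 1 1] := by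
      ext i j
      fin_cases i <;> fin_cases j <;>
        simp [Matrix.mul_apply, Matrix.vecMul, dotProduct, Fin.sum_univ_two]
    have hdet₃ : IsUnit (!![1,0;0,0] + !![0,0;0,1] * C2).det := by
      rw [hTL, Matrix.det_fin_two_of]
      simpa [isUnit_iff_ne_zero] using hc22
    have hmem₃ : fromBlocks (!![1,0;0,0] + !![0,0;0,1] * C2)
        ((P*B*Q') + !![0,0;0,1] * (P'*D*Q')) C2 (P'*D*Q') ∈ SpG := by
      rw [← hg₃eq]
      exact mul_mem (e_mem (S := !![0,0;0,1]) (by rw [t2])) hg₂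
    have h₃H := main_inv h5 hmem₃ hdet₃
    have hrec : eM (-(!![0,0;0,1] : M2)) *
        (eM !![0,0;0,1] * fromBlocks !![1,0;0,0] (P*B*Q') C2 (P'*D*Q')) =
        fromBlocks !![1,0;0,0] (P*B*Q') C2 (P'*D*Q') := by
      rw [← mul_assoc, eM_mul, neg_add_cancel, eM_zero, one_mul]
    have hg₂H : fromBlocks !![1,0;0,0] (P*B*Q') C2 (P'*D*Q') ∈ Hset F := by
      rw [← hrec, hg₃eq]
      exact mul_mem_H (eH h5 (S := -(!![0,0;0,1])) (by rw [Matrix.transpose_neg, t2])) h₃H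
    -- undo the outer conjugation
    have h1 : P'ᵀ * P = 1 := mul_eq_one_comm.mp hPP'
    have h2 : Pᵀ * P' = 1 := mul_eq_one_comm.mp (PQ_swap hPP')
    have h3 : Q * Q'ᵀ = 1 := hQQ'
    have h4 : Q' * Qᵀ = 1 := PQ_swap hQQ'
    have hfin : mM P'ᵀ Pᵀ * (mM P P' * fromBlocks A B C D * mM Q Q') * mM Q'ᵀ Qᵀ =
        fromBlocks A B C D := by
      simp only [← mul_assoc]
      rw [mM_mul, h1, h2, mM_one, one_mul, mul_assoc, mM_mul, h3, h4, mM_one, mul_one]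
    rw [← hfin, hblocks]
    refine mul_mem_H (mul_mem_H (mH h5 ?_) hg₂H) (mH h5 ?_)
    · rw [Matrix.transpose_transpose]; exact h1
    · rw [Matrix.transpose_transpose]
      exact mul_eq_one_comm.mp hQQ'

end Sp4Aux

/-- If `F` is a finite field with `|F| ≥ 5`, then `Sp₄(F)` is perfect. -/
theorem stmt_6 (F : Type*) [Field F] [Fintype F] (h5 : 5 ≤ Fintype.card F) :
    commutator (Matrix.symplecticGroup (Fin 2) F) = ⊤ := by
  rw [Subgroup.eq_top_iff']
  intro g
  obtain ⟨h, hh, hval⟩ := Sp4Aux.sp_mem_H h5 g.2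
  rwa [← Subtype.ext hval]
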